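/- Let C, D be abelian K-categories and F: C → D an exact functor which is full and dense. Then KG(D) ≤ KG(C). -/

import Mathlib

/-!
# Krull-Gabriel dimension: core definitions

We define, for an abelian category `D` and a predicate `P` on its objects (thought of as
singling out a full abelian subcategory closed under the relevant subquotients), the
Krull-Gabriel filtration and the Krull-Gabriel dimension, with values in `WithTop Ordinal`
(where `⊤` plays the role of `∞`, i.e. "undefined").
-/

open CategoryTheory CategoryTheory.Limits

universe v u

namespace KG

variable {D : Type u} [Category.{v} D] [Abelian D]

/-- The subquotient (factor) attached to two nested subobjects `Y ≤ Z` of `X`. -/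
noncomputable def factor {X : D} (Y Z : Subobject X) (h : Y ≤ Z) : D :=
  cokernel (Subobject.ofLE Y Z h)

/-- An object `X` (satisfying `P`) is *simple modulo* a Serre class `S` (relative to the
ambient class `P`) if it does not lie in `S` and every `P`-subobject of `X` lies in `S`
or has quotient in `S`.  This expresses that the image of `X` in the Serre quotient
category `P/S` is a simple object. -/
def SimpleMod (P S : D → Prop) (X : D) : Prop :=
  P X ∧ ¬ S X ∧
    ∀ Y : Subobject X, P (Y : D) → (S (Y : D) ∨ S (cokernel Y.arrow))

/-- An object `X` (satisfying `P`) has *finite length modulo* a Serre class `S`: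
there is a finite chain of `P`-subobjects from `⊥` to `⊤` whose successive factors
lie in `S` or are simple modulo `S`.  This expresses that the image of `X` in the
Serre quotient category `P/S` has finite length. -/
def FinLengthMod (P S : D → Prop) (X : D) : Prop :=
  P X ∧ ∃ (n : ℕ) (c : Fin (n + 1) → Subobject X)
    (hc : ∀ i : Fin n, c i.castSucc ≤ c i.succ),
      c 0 = ⊥ ∧ c (Fin.last n) = ⊤ ∧ (∀ i : Fin (n + 1), P ((c i : D))) ∧
        ∀ i : Fin n, S (factor _ _ (hc i)) ∨ SimpleMod P S (factor _ _ (hc i))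

/-- The Krull-Gabriel filtration of (the full subcategory of) an abelian category:
`kgFilt P 0` consists of the objects of finite length (i.e. of finite length modulo the
zero Serre class, which is the `(-1)`-st filtration step), `kgFilt P (α+1)` consists of
the objects of finite length modulo `kgFilt P α`, and at limit ordinals the filtration
is the union of the preceding steps. -/
noncomputable def kgFilt (P : D → Prop) : Ordinal.{0} → (D → Prop) := fun o =>
  Ordinal.limitRecOn o
    (FinLengthMod P (fun X => Limits.IsZero X))
    (fun _ S => FinLengthMod P S)
    (fun o _ ih X => ∃ (o' : Ordinal.{0}) (h : o' < o), ih o' h X)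

open scoped Classical in
/-- The Krull-Gabriel dimension of the class `P` of objects of the abelian category `D`:
the least ordinal `α` such that the `α`-th step of the Krull-Gabriel filtration exhausts
all of `P`, and `⊤` (i.e. `∞`, "undefined") if there is no such ordinal. -/
noncomputable def kgDimP (P : D → Prop) : WithTop Ordinal.{0} :=
  if _h : ∃ o : Ordinal.{0}, ∀ X : D, P X → kgFilt P o X then
    ((sInf {o : Ordinal.{0} | ∀ X : D, P X → kgFilt P o X} : Ordinal.{0}) : WithTop Ordinal.{0})
  else ⊤

end KG

/-- The Krull-Gabriel dimension of an abelian category, defined via the Krull-Gabriel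
filtration by Serre subcategories. -/
noncomputable def KGdimAb (D : Type u) [Category.{v} D] [Abelian D] : WithTop Ordinal.{0} :=
  KG.kgDimP (D := D) (fun _ => True)

open CategoryTheory

namespace KGProof

open KG CategoryTheory CategoryTheory.Limits

universe v₁ u₁ v₂ u₂

variable {C : Type u₁} [Category.{v₁} C] [Abelian C]
variable {D : Type u₂} [Category.{v₂} D] [Abelian D]

section Map

variable (F : C ⥤ D) [F.Additive] [PreservesFiniteLimits F] [PreservesFiniteColimits F]

/-- Image of a subobject under `F`, transported along an iso `F.obj X ≅ X'`. -/
noncomputable abbrev mapSub {X : C} {X' : D} (e : F.obj X ≅ X') (Y : Subobject X) : Subobject X' :=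
  Subobject.mk (F.map Y.arrow ≫ e.hom)

theorem mapSub_mono {X : C} {X' : D} (e : F.obj X ≅ X') {Y Z : Subobject X} (h : Y ≤ Z) :
    mapSub F e Y ≤ mapSub F e Z :=
  Subobject.mk_le_mk_of_comm (F.map (Subobject.ofLE Y Z h)) (by
    rw [← Category.assoc, ← F.map_comp, Subobject.ofLE_arrow])

theorem mapSub_bot {X : C} {X' : D} (e : F.obj X ≅ X') : mapSub F e (⊥ : Subobject X) = ⊥ := by
  have h0 : F.map (⊥ : Subobject X).arrow ≫ e.hom = 0 := by
    rw [Subobject.bot_arrow, Functor.map_zero, zero_comp]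
  exact Subobject.mk_eq_bot_iff_zero.mpr h0

theorem mapSub_top {X : C} {X' : D} (e : F.obj X ≅ X') : mapSub F e (⊤ : Subobject X) = ⊤ :=
  Subobject.mk_eq_top_of_isIso _

/-- The factor of mapped subobjects is the image of the factor. -/
noncomputable def mapFactorIso {X : C} {X' : D} (e : F.obj X ≅ X') {Y Z : Subobject X}
    (h : Y ≤ Z) :
    factor (mapSub F e Y) (mapSub F e Z) (mapSub_mono F e h) ≅ F.obj (factor Y Z h) := by
  refine Iso.trans
    (cokernel.mapIso (Subobject.ofLE (mapSub F e Y) (mapSub F e Z) (mapSub_mono F e h))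
      (F.map (Subobject.ofLE Y Z h))
      (Subobject.underlyingIso (F.map Y.arrow ≫ e.hom))
      (Subobject.underlyingIso (F.map Z.arrow ≫ e.hom)) ?_)
    (PreservesCokernel.iso F _).symm
  rw [← cancel_mono (F.map Z.arrow ≫ e.hom)]
  have h1 : (Subobject.underlyingIso (F.map Z.arrow ≫ e.hom)).hom ≫ (F.map Z.arrow ≫ e.hom)
      = (mapSub F e Z).arrow := Subobject.underlyingIso_hom_comp_eq_mk _
  have h2 : (Subobject.underlyingIso (F.map Y.arrow ≫ e.hom)).hom ≫ (F.map Y.arrow ≫ e.hom)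
      = (mapSub F e Y).arrow := Subobject.underlyingIso_hom_comp_eq_mk _
  calc (Subobject.ofLE (mapSub F e Y) (mapSub F e Z) (mapSub_mono F e h)
        ≫ (Subobject.underlyingIso (F.map Z.arrow ≫ e.hom)).hom) ≫ (F.map Z.arrow ≫ e.hom)
      = Subobject.ofLE (mapSub F e Y) (mapSub F e Z) (mapSub_mono F e h)
        ≫ (mapSub F e Z).arrow := by rw [Category.assoc, h1]
    _ = (mapSub F e Y).arrow := Subobject.ofLE_arrow _
    _ = (Subobject.underlyingIso (F.map Y.arrow ≫ e.hom)).hom ≫ (F.map Y.arrow ≫ e.hom) := h2.symm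
    _ = ((Subobject.underlyingIso (F.map Y.arrow ≫ e.hom)).hom ≫ F.map (Subobject.ofLE Y Z h))
        ≫ (F.map Z.arrow ≫ e.hom) := by
        rw [Category.assoc, ← Category.assoc (F.map _), ← F.map_comp, Subobject.ofLE_arrow]

end Map

section Surj

variable (F : C ⥤ D) [F.Additive] [PreservesFiniteLimits F] [PreservesFiniteColimits F]
variable [F.Full] [F.EssSurj]

theorem sub_surj {X : C} {X' : D} (e : F.obj X ≅ X') (W : Subobject X') :
    ∃ Y : Subobject X,
      Nonempty (((W : D) ≅ F.obj ((Y : C)))) ∧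
        Nonempty (cokernel W.arrow ≅ F.obj (cokernel Y.arrow)) := by
  let A := F.objPreimage (W : D)
  let iA : F.obj A ≅ (W : D) := F.objObjPreimageIso _
  let m : F.obj A ⟶ F.obj X := iA.hom ≫ W.arrow ≫ e.inv
  haveI hm : Mono m := by
    have : Mono (W.arrow ≫ e.inv) := mono_comp _ _
    exact mono_comp _ _
  let f : A ⟶ X := F.preimage m
  have hf : F.map f = m := F.map_preimage m
  let g : A ⟶ Abelian.image f := Abelian.factorThruImage f
  let ι : Abelian.image f ⟶ X := Abelian.image.ι f
  have hfac : g ≫ ι = f := Abelian.image.fac f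
  haveI : Mono (F.map g ≫ F.map ι) := by
    rw [← F.map_comp, hfac, hf]; exact hm
  haveI : Mono (F.map g) := mono_of_mono (F.map g) (F.map ι)
  haveI : IsIso (F.map g) := isIso_of_mono_of_epi _
  refine ⟨Subobject.mk ι, ?_, ?_⟩
  · exact ⟨iA.symm ≪≫ asIso (F.map g) ≪≫ (F.mapIso (Subobject.underlyingIso ι)).symm⟩
  · refine ⟨Iso.trans
      (cokernel.mapIso W.arrow (F.map (Subobject.mk ι).arrow)
        (iA.symm ≪≫ asIso (F.map g) ≪≫ (F.mapIso (Subobject.underlyingIso ι)).symm)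
        e.symm ?_)
      (PreservesCokernel.iso F _).symm⟩
    have harr : (Subobject.underlyingIso ι).hom ≫ ι = (Subobject.mk ι).arrow :=
      Subobject.underlyingIso_hom_comp_eq_mk _
    have : F.map (Subobject.mk ι).arrow
        = F.map (Subobject.underlyingIso ι).hom ≫ F.map ι := by
      rw [← F.map_comp, harr]
    simp only [Iso.trans_hom, Iso.symm_hom, Functor.mapIso_inv, Category.assoc, this]
    simp only [asIso_hom, ← F.map_comp]
    rw [Iso.inv_hom_id_assoc, hfac, hf]
    simp [m]

end Surj
section Transfer

variable (F : C ⥤ D) [F.Additive] [PreservesFiniteLimits F] [PreservesFiniteColimits F]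
variable [F.Full] [F.EssSurj]

theorem simpleMod_transfer {S : C → Prop} {S' : D → Prop}
    (hS' : ∀ {A B : D}, (A ≅ B) → S' A → S' B)
    (h : ∀ A : C, S A → S' (F.obj A))
    {X : C} {X' : D} (e : F.obj X ≅ X')
    (hX : SimpleMod (fun _ => True) S X) :
    S' X' ∨ SimpleMod (fun _ => True) S' X' := by
  by_cases hs : S' X'
  · exact Or.inl hs
  refine Or.inr ⟨trivial, hs, fun W _ => ?_⟩
  obtain ⟨Y, ⟨i1⟩, ⟨i2⟩⟩ := sub_surj F e W
  rcases hX.2.2 Y trivial with hY | hY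
  · exact Or.inl (hS' i1.symm (h _ hY))
  · exact Or.inr (hS' i2.symm (h _ hY))

theorem finLengthMod_transfer {S : C → Prop} {S' : D → Prop}
    (hS' : ∀ {A B : D}, (A ≅ B) → S' A → S' B)
    (h : ∀ A : C, S A → S' (F.obj A))
    {X : C} {X' : D} (e : F.obj X ≅ X')
    (hX : FinLengthMod (fun _ => True) S X) :
    FinLengthMod (fun _ => True) S' X' := by
  obtain ⟨-, n, c, hc, h0, hlast, -, hfac⟩ := hX
  refine ⟨trivial, n, fun i => mapSub F e (c i), fun i => mapSub_mono F e (hc i), ?_, ?_,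
    fun _ => trivial, fun i => ?_⟩
  · show mapSub F e (c 0) = ⊥
    rw [h0, mapSub_bot]
  · show mapSub F e (c (Fin.last n)) = ⊤
    rw [hlast, mapSub_top]
  · rcases hfac i with hf | hf
    · exact Or.inl (hS' (mapFactorIso F e (hc i)).symm (h _ hf))
    · exact simpleMod_transfer F hS' h (mapFactorIso F e (hc i)).symm hf

end Transfer

section Filt

theorem kgFilt_zero (P : D → Prop) :
    kgFilt P (0 : Ordinal.{0}) = FinLengthMod P (fun X => IsZero X) :=
  Ordinal.limitRecOn_zero _ _ _

theorem kgFilt_succ (P : D → Prop) (o : Ordinal.{0}) :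
    kgFilt P (Order.succ o) = FinLengthMod P (kgFilt P o) :=
  Ordinal.limitRecOn_succ _ _ _ _

theorem kgFilt_limit (P : D → Prop) {o : Ordinal.{0}} (ho : Order.IsSuccLimit o) :
    kgFilt P o = fun X => ∃ o' : Ordinal.{0}, ∃ _ : o' < o, kgFilt P o' X :=
  Ordinal.limitRecOn_limit _ _ _ _ ho

theorem kgFilt_isoClosed (o : Ordinal.{0}) :
    ∀ {A B : D}, (A ≅ B) → kgFilt (fun _ => True) o A → kgFilt (fun _ => True) o B := by
  induction o using Ordinal.induction with
  | _ o IH =>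
    intro A B i hA
    rcases Ordinal.zero_or_succ_or_isSuccLimit o with rfl | ⟨o', rfl⟩ | hlim
    · rw [kgFilt_zero] at hA ⊢
      exact finLengthMod_transfer (𝟭 D) (fun i' h => h.of_iso i'.symm) (fun A h => h) i hA
    · rw [kgFilt_succ] at hA ⊢
      exact finLengthMod_transfer (𝟭 D) (fun i' h => IH o' (Order.lt_succ o') i' h)
        (fun A h => h) i hA
    · rw [kgFilt_limit _ hlim] at hA ⊢
      obtain ⟨o', ho', h⟩ := hA
      exact ⟨o', ho', IH o' ho' i h⟩

theorem kgFilt_transfer (F : C ⥤ D) [F.Additive] [PreservesFiniteLimits F]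
    [PreservesFiniteColimits F] [F.Full] [F.EssSurj] (o : Ordinal.{0}) :
    ∀ X : C, kgFilt (fun _ => True) o X → kgFilt (fun _ => True) o (F.obj X) := by
  induction o using Ordinal.induction with
  | _ o IH =>
    intro X hX
    rcases Ordinal.zero_or_succ_or_isSuccLimit o with rfl | ⟨o', rfl⟩ | hlim
    · rw [kgFilt_zero] at hX ⊢
      exact finLengthMod_transfer F (fun i' h => h.of_iso i'.symm)
        (fun A h => F.map_isZero h) (Iso.refl _) hX
    · rw [kgFilt_succ] at hX ⊢
      exact finLengthMod_transfer F (fun i' h => kgFilt_isoClosed o' i' h)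
        (fun A h => IH o' (Order.lt_succ o') A h) (Iso.refl _) hX
    · rw [kgFilt_limit _ hlim] at hX ⊢
      obtain ⟨o', ho', h⟩ := hX
      exact ⟨o', ho', IH o' ho' X h⟩

end Filt

end KGProof

/-- **Lemma 2.4(a)** (Lemma `0(a)` in the paper):
if `C` and `D` are abelian `K`-categories and `F : C ⥤ D` is an exact functor which is
full and dense (essentially surjective), then `KG(D) ≤ KG(C)`. -/
theorem kg_le_of_exact_full_dense
    (K : Type) [Field K]
    (C : Type u) [Category.{v} C] [Abelian C] [Linear K C]
    (D : Type u') [Category.{v'} D] [Abelian D] [Linear K D]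
    (F : C ⥤ D) [F.Additive] [F.Linear K]
    [Limits.PreservesFiniteLimits F] [Limits.PreservesFiniteColimits F]
    [F.Full] [F.EssSurj] :
    KGdimAb D ≤ KGdimAb C := by
  have key : ∀ o : Ordinal.{0},
      (∀ X : C, KG.kgFilt (fun _ => True) o X) →
      ∀ X' : D, KG.kgFilt (fun _ => True) o X' := by
    intro o hCo X'
    exact KGProof.kgFilt_isoClosed o (F.objObjPreimageIso X')
      (KGProof.kgFilt_transfer F o _ (hCo _))
  unfold KGdimAb KG.kgDimP
  split_ifs with h1 h2 h2
  · refine WithTop.coe_le_coe.mpr ?_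
    refine csInf_le_csInf (OrderBot.bddBelow _) h2 ?_
    intro o ho
    exact fun X' _ => key o (fun X => ho X trivial) X'
  · exact le_top
  · exact absurd (h2.imp fun o ho X' _ => key o (fun X => ho X trivial) X') h1
  · exact le_top
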